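/- Let 𝒜 be a unital C*-algebra, ξ a continuous self-adjoint linear functional, and a ∈ 𝒜. Then exp(t a) belongs to the isotropy subgroup 𝒢_ξ of the action α for all t ∈ ℝ if and only if ξ(a† b + b a) = 0 for all b ∈ 𝒜. In particular, the identity element 1 (or any nonzero real multiple of it) never satisfies this condition when ξ ≠ 0. -/

import Mathlib

set_option linter.unusedSectionVars false
set_option linter.unusedVariables false

open NormedSpace

section Aux

variable {A : Type*} [NormedRing A] [StarRing A] [CStarRing A] [NormedAlgebra ℂ A]
    [CompleteSpace A] [StarModule ℂ A]

lemma exp_coe_eq (a : A) (t : ℝ) : exp ((t:ℂ) • a) = exp (t • a) := by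
  rw [Complex.coe_smul]

lemma star_exp_coe (a : A) (t : ℝ) :
    star (exp ((t:ℂ) • a)) = exp (t • star a) := by
  rw [exp_coe_eq, star_exp, star_smul, star_trivial]

lemma c_hasDerivAt (a b : A) (t : ℝ) :
    HasDerivAt (fun t : ℝ => exp (t • star a) * b * exp (t • a))
      (star a * (exp (t • star a) * b * exp (t • a))
        + (exp (t • star a) * b * exp (t • a)) * a) t := by
  have h1 : HasDerivAt (fun u : ℝ => exp (u • star a))
      (star a * exp (t • star a)) t := hasDerivAt_exp_smul_const' _ t
  have h2 : HasDerivAt (fun u : ℝ => exp (u • a)) (exp (t • a) * a) t :=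
    hasDerivAt_exp_smul_const _ t
  have := (h1.mul_const b).mul h2
  convert this using 1
  · rfl
  · simp [mul_assoc, mul_add]

lemma f_hasDerivAt (ξ : A →L[ℂ] ℂ) (a b : A) (t : ℝ) :
    HasDerivAt (fun t : ℝ => ξ (exp (t • star a) * b * exp (t • a)))
      (ξ (star a * (exp (t • star a) * b * exp (t • a))
        + (exp (t • star a) * b * exp (t • a)) * a)) t :=
  (ξ.restrictScalars ℝ).hasFDerivAt.comp_hasDerivAt t (c_hasDerivAt a b t)

end Aux

/-- `exp(t a)` belongs to the isotropy subgroup `𝒢_ξ` of the action `α` for all real `t` iff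
`ξ(a† b + b a) = 0` for all `b`; and no nonzero real multiple of the identity satisfies this
condition when `ξ ≠ 0`. -/
theorem stmt11 {A : Type*} [NormedRing A] [StarRing A] [CStarRing A] [NormedAlgebra ℂ A]
    [CompleteSpace A] [StarModule ℂ A] (ξ : A →L[ℂ] ℂ)
    (hsa : ∀ a : A, ξ (star a) = star (ξ a)) (a : A) :
    ((∀ t : ℝ, ∀ b : A,
        ξ (star (NormedSpace.exp ((t : ℂ) • a)) * b * NormedSpace.exp ((t : ℂ) • a)) = ξ b)
      ↔ ∀ b : A, ξ (star a * b + b * a) = 0) ∧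
    ∀ γ : ℝ, γ ≠ 0 → ξ ≠ 0 →
      ¬ ∀ b : A, ξ (star ((γ : ℂ) • (1 : A)) * b + b * ((γ : ℂ) • (1 : A))) = 0 := by
  constructor
  · constructor
    · intro h b
      have hconst : (fun t : ℝ => ξ (exp (t • star a) * b * exp (t • a)))
          = fun _ : ℝ => ξ b := by
        funext t
        rw [← star_exp_coe a t, ← exp_coe_eq a t]
        exact h t b
      have h0 : HasDerivAt (fun t : ℝ => ξ (exp (t • star a) * b * exp (t • a)))
          0 0 := hconst ▸ hasDerivAt_const (0 : ℝ) (ξ b)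
      have := (f_hasDerivAt ξ a b 0).unique h0
      simpa using this
    · intro h t b
      have hf : ∀ s : ℝ, HasDerivAt
          (fun t : ℝ => ξ (exp (t • star a) * b * exp (t • a))) 0 s := by
        intro s
        have := f_hasDerivAt ξ a b s
        rwa [h (exp (s • star a) * b * exp (s • a))] at this
      have hc := is_const_of_deriv_eq_zero (fun s => (hf s).differentiableAt)
        (fun s => (hf s).deriv)
      have := hc t 0
      rw [star_exp_coe, exp_coe_eq, this]
      simp
  · intro γ hγ hξ hcontra
    apply hξ
    ext b
    have := hcontra b
    have h2 : ξ ((2 * γ : ℂ) • b) = 0 := by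
      rw [← this]
      congr 1
      rw [star_smul, star_one, Complex.star_def, Complex.conj_ofReal]
      rw [smul_mul_assoc, one_mul, mul_smul_comm, mul_one, ← add_smul]
      ring_nf
    rw [map_smul, smul_eq_mul, mul_eq_zero] at h2
    rcases h2 with h2 | h2
    · exact absurd (by exact_mod_cast (mul_eq_zero.mp h2).resolve_left two_ne_zero : γ = 0) hγ
    · simpa using h2
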